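/- Let A = [a_1 ⋯ a_n] ∈ ℝ^{m×n} be a full row-rank matrix whose columns all have Euclidean norm one, and let L = {x ∈ ℝ^n : Ax = 0}. If ρ(A) < 0 then |ρ(A)| ≤ σ(L). -/

import Mathlib

noncomputable section
open Matrix

/-- The Euclidean norm of a vector in ℝᵐ. -/
def eNorm {m : ℕ} (y : Fin m → ℝ) : ℝ := Real.sqrt (∑ k, y k ^ 2)

/-- The condition measure `ρ(A) := max_{‖y‖₂ = 1} min_{i} ⟨a_i, y⟩`,
where `a_1, …, a_n` are the columns of `A`. -/
def rho {m n : ℕ} (A : Matrix (Fin m) (Fin n) ℝ) : ℝ :=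
  sSup {t | ∃ y : Fin m → ℝ, eNorm y = 1 ∧ t = ⨅ i, ∑ k, A k i * y k}

/-- The ℓ∞ norm of a vector in ℝⁿ. -/
def linf {n : ℕ} (x : Fin n → ℝ) : ℝ := ⨆ j, |x j|

/-- The maximum support index set `J(S)` of a set `S ⊆ ℝⁿ`:
indices `j` such that `x_j > 0` for some nonnegative `x ∈ S`. -/
def maxSupport {n : ℕ} (S : Set (Fin n → ℝ)) : Set (Fin n) :=
  {j | ∃ x ∈ S, (∀ k, 0 ≤ x k) ∧ 0 < x j}

/-- `σ_j(S) := max {x_j : x ∈ S ∩ ℝⁿ₊, ‖x‖_∞ ≤ 1}`. -/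
def sigmaJ {n : ℕ} (S : Set (Fin n → ℝ)) (j : Fin n) : ℝ :=
  sSup {t | ∃ x ∈ S, (∀ k, 0 ≤ x k) ∧ linf x ≤ 1 ∧ x j = t}

open Classical in
/-- `σ(S) := min_{j ∈ J(S)} σ_j(S)` when `J(S) ≠ ∅`, and `σ(S) := 1` otherwise. -/
def sigmaCond {n : ℕ} (S : Set (Fin n → ℝ)) : ℝ :=
  if maxSupport S = ∅ then 1 else sInf (sigmaJ S '' maxSupport S)

open RealInnerProductSpace Finset

abbrev Euc (m : ℕ) := EuclideanSpace ℝ (Fin m)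

def toE {m : ℕ} (y : Fin m → ℝ) : Euc m := (WithLp.equiv 2 (Fin m → ℝ)).symm y

lemma toE_apply {m : ℕ} (y : Fin m → ℝ) (k : Fin m) : toE y k = y k := rfl

lemma eNorm_eq_norm {m : ℕ} (y : Fin m → ℝ) : eNorm y = ‖toE y‖ := by
  rw [EuclideanSpace.norm_eq, eNorm]
  congr 1; apply Finset.sum_congr rfl; intro k _; rw [toE_apply, Real.norm_eq_abs, sq_abs]

lemma dot_eq_inner {m : ℕ} (u v : Fin m → ℝ) :
    ∑ k, u k * v k = ⟪toE u, toE v⟫ := by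
  rw [PiLp.inner_apply]; simp only [toE_apply, RCLike.inner_apply, conj_trivial, mul_comm]

lemma abs_le_linf {n : ℕ} (x : Fin n → ℝ) (j : Fin n) : |x j| ≤ linf x := by
  rw [linf]
  exact le_ciSup (Set.Finite.bddAbove (Set.finite_range fun j => |x j|)) j
lemma aux1 (t X D : ℝ) (ht : 0 < t) (h : t * (2*(X+1)) ≤ D) : t * X ≤ D/2 := by
  nlinarith

lemma key_exists {m n : ℕ} (hn : 0 < n) (a : Fin n → Euc m) (b : Fin n → ℝ)
    (ρ0 : ℝ) (hρ : ρ0 < 0)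
    (hcoer : ∀ y : Euc m, ‖y‖ = 1 → ∃ i, ⟪a i, y⟫ ≤ ρ0)
    (hfark : ∀ lam : Fin n → ℝ, (∀ i, 0 ≤ lam i) → (∑ i, lam i • a i = 0) →
      ∑ i, lam i * b i ≤ 0) :
    ∃ y : Euc m, ∀ i, b i ≤ ⟪a i, y⟫ := by
  classical
  haveI : Nonempty (Fin n) := ⟨⟨0, hn⟩⟩
  have hne : (Finset.univ : Finset (Fin n)).Nonempty := Finset.univ_nonempty
  set g : Fin n → Euc m → ℝ := fun i y => ⟪a i, y⟫ - b i with hg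
  set f : Euc m → ℝ := fun y => Finset.univ.inf' hne (fun i => g i y) with hf
  have hfle : ∀ (y : Euc m) (i : Fin n), f y ≤ g i y := fun y i =>
    Finset.inf'_le _ (mem_univ i)
  have hfcont : Continuous f := by
    apply Continuous.finset_inf'_apply hne
    intro i _
    exact (continuous_const.inner continuous_id).sub continuous_const
  set C : ℝ := Finset.univ.sup' hne (fun i => |b i|) with hC
  have hCb : ∀ i, |b i| ≤ C := fun i => by
    rw [hC]; exact Finset.le_sup' (fun i => |b i|) (mem_univ i)
  have hCnn : 0 ≤ C := le_trans (abs_nonneg _) (hCb (Classical.arbitrary _))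
  set R : ℝ := (2*C+1)/(-ρ0) with hRdef
  have hR : 0 < R := by
    apply div_pos (by linarith) (by linarith)
  have hf0 : -C ≤ f 0 := by
    apply Finset.le_inf'
    intro i _
    have := hCb i
    have : -C ≤ -|b i| := by linarith
    have h2 : -|b i| ≤ -(b i) := by
      have := le_abs_self (b i); linarith
    simp only [hg, inner_zero_right, zero_sub]
    linarith
  have hgrow : ∀ y : Euc m, R ≤ ‖y‖ → f y < f 0 := by
    intro y hy
    have hy0 : y ≠ 0 := by
      intro h; rw [h, norm_zero] at hy; linarith
    have hyn : 0 < ‖y‖ := norm_pos_iff.mpr hy0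
    obtain ⟨i, hi⟩ := hcoer (‖y‖⁻¹ • y) (norm_smul_inv_norm hy0)
    have hinner : ⟪a i, y⟫ ≤ ρ0 * ‖y‖ := by
      have h1 : ⟪a i, ‖y‖⁻¹ • y⟫ = ‖y‖⁻¹ * ⟪a i, y⟫ := real_inner_smul_right _ _ _
      rw [h1] at hi
      have := mul_le_mul_of_nonneg_left hi (le_of_lt hyn)
      rw [← mul_assoc, mul_inv_cancel₀ (ne_of_gt hyn), one_mul] at this
      linarith [this]
    have hρy : ρ0 * ‖y‖ ≤ ρ0 * R := by
      apply mul_le_mul_of_nonpos_left hy (le_of_lt hρ)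
    have hρ0ne : -ρ0 ≠ 0 := by linarith
    have hρR : ρ0 * R = -(2*C+1) := by
      rw [hRdef]; field_simp; rw [div_self (by linarith : ρ0 ≠ 0)]
    have : f y ≤ g i y := hfle y i
    have : g i y ≤ ρ0 * ‖y‖ - b i := by simp only [hg]; linarith
    have hbi : -(b i) ≤ C := by have := hCb i; have := neg_abs_le (b i); linarith
    calc f y ≤ g i y := hfle y i
      _ ≤ ρ0 * ‖y‖ - b i := this
      _ ≤ -(2*C+1) + C := by linarith [hρy, hρR ▸ hρy]
      _ < -C := by linarith
      _ ≤ f 0 := hf0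
  obtain ⟨ybar, hymem, hymax⟩ := (isCompact_closedBall (0:Euc m) R).exists_isMaxOn
    ⟨0, by simp [le_of_lt hR]⟩ hfcont.continuousOn
  have hglobal : ∀ y, f y ≤ f ybar := by
    intro y
    by_cases hy : y ∈ Metric.closedBall (0:Euc m) R
    · exact hymax hy
    · have : R ≤ ‖y‖ := by
        simp only [Metric.mem_closedBall, dist_zero_right, not_le] at hy
        linarith
      have h0mem : (0:Euc m) ∈ Metric.closedBall (0:Euc m) R := by simp [le_of_lt hR]
      exact le_trans (le_of_lt (hgrow y this)) (hymax h0mem)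
  by_cases hβ : 0 ≤ f ybar
  · refine ⟨ybar, fun i => ?_⟩
    have := hfle ybar i
    simp only [hg] at this
    linarith
  push_neg at hβ
  exfalso
  set β := f ybar with hβdef
  set I : Finset (Fin n) := Finset.univ.filter (fun i => g i ybar = β) with hI
  have hβle : ∀ i, β ≤ g i ybar := fun i => hfle ybar i
  have hInem : ∃ i, i ∈ I := by
    obtain ⟨i, _, hi⟩ := Finset.exists_mem_eq_inf' hne (fun i => g i ybar)
    exact ⟨i, by simp [hI, hi.symm]; rfl⟩
  have hhull : (0:Euc m) ∈ convexHull ℝ (a '' ↑I) := by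
    by_contra h0
    obtain ⟨φ, u, hsep, hu⟩ := geometric_hahn_banach_closed_point
      (convex_convexHull ℝ _)
      ((Set.Finite.isCompact_convexHull ℝ ((I.finite_toSet).image a)).isClosed) h0
    rw [map_zero] at hu
    set d : Euc m := -((InnerProductSpace.toDual ℝ (Euc m)).symm φ) with hd
    have hdi : ∀ i ∈ I, 0 < ⟪a i, d⟫ := by
      intro i hi
      have h1 : φ (a i) < u := hsep _ (subset_convexHull ℝ _ ⟨i, hi, rfl⟩)
      have h2 : ⟪(InnerProductSpace.toDual ℝ (Euc m)).symm φ, a i⟫ = φ (a i) :=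
        InnerProductSpace.toDual_symm_apply
      have h3 : ⟪a i, d⟫ = -φ (a i) := by
        rw [hd, real_inner_comm, inner_neg_left, h2]
      rw [h3]; linarith
    set ti : Fin n → ℝ := fun i =>
      if i ∈ I then (1:ℝ) else (g i ybar - β)/(2*(‖a i‖*‖d‖+1)) with hti
    have hti_pos : ∀ i, 0 < ti i := by
      intro i
      by_cases hi : i ∈ I
      · simp [hti, hi]
      · have h1 : β < g i ybar := by
          rcases lt_or_eq_of_le (hβle i) with h | h
          · exact h
          · exact absurd (by simp [hI, h.symm]) hi
        have h2 : (0:ℝ) < 2*(‖a i‖*‖d‖+1) := by positivity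
        simp only [hti, if_neg hi]
        exact div_pos (by linarith) h2
    set t : ℝ := Finset.univ.inf' hne ti with ht
    have htpos : 0 < t := by
      obtain ⟨i, _, hi⟩ := Finset.exists_mem_eq_inf' hne ti
      rw [ht, hi]; exact hti_pos i
    have htle : ∀ i, t ≤ ti i := fun i => Finset.inf'_le _ (mem_univ i)
    set y' : Euc m := ybar + t • d with hy'
    have hgy' : ∀ i, g i y' = g i ybar + t * ⟪a i, d⟫ := by
      intro i
      simp only [hg, hy', inner_add_right, real_inner_smul_right]
      ring
    have hall : ∀ i, β < g i y' := by
      intro i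
      rw [hgy' i]
      by_cases hi : i ∈ I
      · have h1 : g i ybar = β := by simpa [hI] using hi
        have h2 := hdi i hi
        have h3 := mul_pos htpos h2
        linarith
      · have h1 : β < g i ybar := by
          rcases lt_or_eq_of_le (hβle i) with h | h
          · exact h
          · exact absurd (by simp [hI, h.symm]) hi
        have h2 : -(‖a i‖*‖d‖) ≤ ⟪a i, d⟫ := by
          have := abs_real_inner_le_norm (a i) d
          have := neg_abs_le ⟪a i, d⟫
          linarith [abs_real_inner_le_norm (a i) d, neg_abs_le ⟪a i, d⟫]
        have h3 : t ≤ (g i ybar - β)/(2*(‖a i‖*‖d‖+1)) := by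
          have := htle i; simpa [hti, if_neg hi] using this
        have h4 : (0:ℝ) < 2*(‖a i‖*‖d‖+1) := by positivity
        have h6 : t * (2*(‖a i‖*‖d‖+1)) ≤ g i ybar - β := by
          calc t * (2*(‖a i‖*‖d‖+1)) ≤ ((g i ybar - β)/(2*(‖a i‖*‖d‖+1))) * (2*(‖a i‖*‖d‖+1)) :=
                mul_le_mul_of_nonneg_right h3 (le_of_lt h4)
            _ = g i ybar - β := by field_simp
        have h5 : t * (‖a i‖*‖d‖) ≤ (g i ybar - β)/2 :=
          aux1 t (‖a i‖*‖d‖) (g i ybar - β) htpos h6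
        have h7 : t * (-(‖a i‖*‖d‖)) ≤ t * ⟪a i, d⟫ :=
          mul_le_mul_of_nonneg_left h2 (le_of_lt htpos)
        have h9 : t * (-(‖a i‖*‖d‖)) = -(t * (‖a i‖*‖d‖)) := by ring
        linarith
    obtain ⟨i, _, hi⟩ := Finset.exists_mem_eq_inf' hne (fun i => g i y')
    have hfy' : f y' = g i y' := hi
    have := hglobal y'
    rw [hfy'] at this
    exact absurd this (not_le.mpr (hall i))
  -- extract weights
  rw [_root_.convexHull_eq] at hhull
  obtain ⟨ι, s, w, z, hw0, hw1, hz, hcm⟩ := hhull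
  have hcm' : ∑ i ∈ s, w i • z i = 0 := by
    rw [← Finset.centerMass_eq_of_sum_1 _ _ hw1]; exact hcm
  have hidx : ∀ i ∈ s, ∃ j, j ∈ I ∧ a j = z i := by
    intro i hi
    obtain ⟨j, hj, hj2⟩ := hz i hi
    exact ⟨j, by simpa using hj, hj2⟩
  set idx : ι → Fin n := fun i =>
    if h : i ∈ s then (hidx i h).choose else Classical.arbitrary _ with hidxdef
  have hidxI : ∀ i ∈ s, idx i ∈ I ∧ a (idx i) = z i := by
    intro i hi
    simp only [hidxdef, dif_pos hi]
    exact (hidx i hi).choose_spec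
  set lam : Fin n → ℝ := fun j => ∑ i ∈ s.filter (fun i => idx i = j), w i with hlam
  have hlam0 : ∀ j, 0 ≤ lam j := by
    intro j
    apply Finset.sum_nonneg
    intro i hi
    exact hw0 i (Finset.mem_filter.mp hi).1
  have hsum : ∑ j, lam j • a j = 0 := by
    have h1 : ∀ j : Fin n, lam j • a j = ∑ i ∈ s.filter (fun i => idx i = j), w i • a j := by
      intro j; rw [hlam]; exact Finset.sum_smul
    calc ∑ j, lam j • a j = ∑ j, ∑ i ∈ s.filter (fun i => idx i = j), w i • a (idx i) := by
          apply Finset.sum_congr rfl; intro j _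
          rw [h1 j]
          apply Finset.sum_congr rfl
          intro i hi
          rw [(Finset.mem_filter.mp hi).2]
      _ = ∑ i ∈ s, w i • a (idx i) := Finset.sum_fiberwise_of_maps_to (fun i _ => mem_univ _) _
      _ = ∑ i ∈ s, w i • z i := by
          apply Finset.sum_congr rfl; intro i hi; rw [(hidxI i hi).2]
      _ = 0 := hcm'
  have hbsum : ∑ j, lam j * b j = -β := by
    have h1 : ∀ i ∈ s, b (idx i) = ⟪a (idx i), ybar⟫ - β := by
      intro i hi
      have h2 : g (idx i) ybar = β := by
        have := (hidxI i hi).1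
        simpa [hI] using this
      simp only [hg] at h2
      linarith
    calc ∑ j, lam j * b j = ∑ j, ∑ i ∈ s.filter (fun i => idx i = j), w i * b (idx i) := by
          apply Finset.sum_congr rfl; intro j _
          rw [hlam, Finset.sum_mul]
          apply Finset.sum_congr rfl
          intro i hi
          rw [(Finset.mem_filter.mp hi).2]
      _ = ∑ i ∈ s, w i * b (idx i) := Finset.sum_fiberwise_of_maps_to (fun i _ => mem_univ _) _
      _ = ∑ i ∈ s, (w i * ⟪a (idx i), ybar⟫ - w i * β) := by
          apply Finset.sum_congr rfl; intro i hi
          rw [h1 i hi]; ring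
      _ = ⟪∑ i ∈ s, w i • a (idx i), ybar⟫ - β := by
          rw [Finset.sum_sub_distrib, ← Finset.sum_mul, hw1, one_mul, sum_inner]
          congr 1
          apply Finset.sum_congr rfl; intro i _
          rw [real_inner_smul_left]
      _ = -β := by
          have : ∑ i ∈ s, w i • a (idx i) = 0 := by
            calc ∑ i ∈ s, w i • a (idx i) = ∑ i ∈ s, w i • z i := by
                  apply Finset.sum_congr rfl; intro i hi; rw [(hidxI i hi).2]
              _ = 0 := hcm'
          rw [this, inner_zero_left]; ring
  have := hfark lam hlam0 hsum
  rw [hbsum] at this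
  linarith
/-- For a full row-rank matrix `A` with unit columns and `L = {x : Ax = 0}`:
if `ρ(A) < 0` then `|ρ(A)| ≤ σ(L)`. -/
theorem abs_rho_le_sigma {m n : ℕ} (hn : 0 < n) (A : Matrix (Fin m) (Fin n) ℝ)
    (hrank : A.rank = m) (hcols : ∀ i, eNorm (fun k => A k i) = 1)
    (hneg : rho A < 0) :
    |rho A| ≤ sigmaCond ((LinearMap.ker A.mulVecLin : Submodule ℝ (Fin n → ℝ)) :
      Set (Fin n → ℝ)) := by
  classical
  haveI : Nonempty (Fin n) := ⟨⟨0, hn⟩⟩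
  set L : Set (Fin n → ℝ) :=
    ((LinearMap.ker A.mulVecLin : Submodule ℝ (Fin n → ℝ)) : Set (Fin n → ℝ)) with hL
  have hLmem : ∀ x : Fin n → ℝ, x ∈ L ↔ A.mulVecLin x = 0 := by
    intro x; rw [hL, SetLike.mem_coe, LinearMap.mem_ker]
  have hLsmul : ∀ (c : ℝ) (x : Fin n → ℝ), x ∈ L → c • x ∈ L := by
    intro c x hx
    rw [hLmem] at hx ⊢
    rw [_root_.map_smul, hx, smul_zero]
  set a : Fin n → Euc m := fun i => toE (fun k => A k i) with ha
  have hanorm : ∀ i, ‖a i‖ = 1 := fun i => by rw [ha, ← eNorm_eq_norm]; exact hcols i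
  set S : Set ℝ := {t | ∃ y : Fin m → ℝ, eNorm y = 1 ∧ t = ⨅ i, ∑ k, A k i * y k} with hS
  have hrhoS : rho A = sSup S := rfl
  have hdot : ∀ (y : Fin m → ℝ) (i : Fin n), (∑ k, A k i * y k) = ⟪a i, toE y⟫ := by
    intro y i; rw [ha]; exact dot_eq_inner _ y
  have hSb : ∀ t ∈ S, t ≤ 1 := by
    rintro t ⟨y, hy, rfl⟩
    have h1 : (⨅ i, ∑ k, A k i * y k) ≤ ∑ k, A k ⟨0, hn⟩ * y k :=
      ciInf_le (Set.Finite.bddBelow (Set.finite_range _)) _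
    have h2 : ∑ k, A k ⟨0, hn⟩ * y k ≤ 1 := by
      rw [hdot]
      calc ⟪a ⟨0, hn⟩, toE y⟫ ≤ ‖a ⟨0, hn⟩‖ * ‖toE y‖ := real_inner_le_norm _ _
        _ = 1 := by rw [hanorm, ← eNorm_eq_norm, hy, one_mul]
    linarith
  have hSbdd : BddAbove S := ⟨1, fun t ht => hSb t ht⟩
  have hm : 0 < m := by
    rcases Nat.eq_zero_or_pos m with h | h
    · exfalso
      have := hcols ⟨0, hn⟩
      subst h
      simp [eNorm] at this
    · exact h
  have hrho_ge : -1 ≤ rho A := by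
    set y0 : Fin m → ℝ := fun k => if k = (⟨0, hm⟩ : Fin m) then 1 else 0 with hy0def
    have hy0 : eNorm y0 = 1 := by
      rw [eNorm]
      have : ∑ k, y0 k ^ 2 = 1 := by
        rw [hy0def]
        rw [Finset.sum_eq_single (⟨0, hm⟩ : Fin m)]
        · simp
        · intro k _ hk; simp [hk]
        · intro h; exact absurd (mem_univ _) h
      rw [this, Real.sqrt_one]
    have hmem : (⨅ i, ∑ k, A k i * y0 k) ∈ S := ⟨y0, hy0, rfl⟩
    have hge : -1 ≤ ⨅ i, ∑ k, A k i * y0 k := by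
      apply le_ciInf
      intro i
      rw [hdot]
      have h1 := abs_real_inner_le_norm (a i) (toE y0)
      rw [hanorm, ← eNorm_eq_norm, hy0, one_mul] at h1
      have := neg_abs_le ⟪a i, toE y0⟫
      linarith
    exact le_trans hge (le_csSup hSbdd hmem)
  have hcoer : ∀ y : Euc m, ‖y‖ = 1 → ∃ i, ⟪a i, y⟫ ≤ rho A := by
    intro y hy
    set yf : Fin m → ℝ := fun k => y k with hyf
    have hty : toE yf = y := rfl
    have hyn : eNorm yf = 1 := by rw [eNorm_eq_norm, hty, hy]
    have hmem : (⨅ i, ∑ k, A k i * yf k) ∈ S := ⟨yf, hyn, rfl⟩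
    obtain ⟨i, hi⟩ := exists_eq_ciInf_of_finite (f := fun i => ∑ k, A k i * yf k)
    refine ⟨i, ?_⟩
    have h1 : ⟪a i, y⟫ = ∑ k, A k i * yf k := by rw [hdot yf i, hty]
    rw [h1, hi]
    exact le_csSup hSbdd hmem
  have hfeas : ∀ (x : Fin n → ℝ) (j : Fin n), x ∈ L → (∀ k, 0 ≤ x k) → linf x ≤ 1 →
      x j ≤ sigmaJ L j := by
    intro x j hxL hx0 hx1
    rw [sigmaJ]
    have hbdd : BddAbove {t | ∃ x ∈ L, (∀ k, 0 ≤ x k) ∧ linf x ≤ 1 ∧ x j = t} := by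
      refine ⟨1, ?_⟩
      rintro t ⟨x', _, hx0', hx1', rfl⟩
      exact le_trans (le_trans (le_abs_self _) (abs_le_linf x' j)) hx1'
    exact le_csSup hbdd ⟨x, hxL, hx0, hx1, rfl⟩
  have hmain : ∀ j ∈ maxSupport L, -(rho A) ≤ sigmaJ L j := by
    intro j hj
    obtain ⟨xb, hxbL, hxb0, hxbj⟩ := hj
    have hσpos : 0 < sigmaJ L j := by
      set M := max (linf xb) 1 with hM
      have hM1 : (1 : ℝ) ≤ M := le_max_right _ _
      have hM0 : (0 : ℝ) < M := lt_of_lt_of_le one_pos hM1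
      have hlinf_le : linf xb ≤ M := le_max_left _ _
      set x' : Fin n → ℝ := M⁻¹ • xb with hx'
      have hx'L : x' ∈ L := hLsmul _ _ hxbL
      have hx'0 : ∀ k, 0 ≤ x' k := fun k =>
        mul_nonneg (inv_nonneg.mpr (le_of_lt hM0)) (hxb0 k)
      have hx'1 : linf x' ≤ 1 := by
        rw [linf]
        apply ciSup_le
        intro k
        have h1 : |x' k| = M⁻¹ * |xb k| := by
          rw [hx']
          simp [abs_mul, abs_of_nonneg (inv_nonneg.mpr (le_of_lt hM0))]
        rw [h1]
        have h2 : |xb k| ≤ M := le_trans (abs_le_linf xb k) hlinf_le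
        calc M⁻¹ * |xb k| ≤ M⁻¹ * M :=
              mul_le_mul_of_nonneg_left h2 (inv_nonneg.mpr (le_of_lt hM0))
          _ = 1 := inv_mul_cancel₀ (ne_of_gt hM0)
      have h3 := hfeas x' j hx'L hx'0 hx'1
      have h4 : 0 < x' j := mul_pos (inv_pos.mpr hM0) hxbj
      linarith
    by_cases hσ1 : 1 ≤ sigmaJ L j
    · linarith
    push_neg at hσ1
    set σ := sigmaJ L j with hσdef
    set b : Fin n → ℝ := fun i => if i = j then 1 else -σ with hb
    have hfark : ∀ lam : Fin n → ℝ, (∀ i, 0 ≤ lam i) → (∑ i, lam i • a i = 0) →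
        ∑ i, lam i * b i ≤ 0 := by
      intro lam hlam0 hlsum
      have hcoord : ∀ k, ∑ i, lam i * A k i = 0 := by
        intro k
        have h1 := congrArg (EuclideanSpace.equiv (Fin m) ℝ) hlsum
        rw [map_sum] at h1
        have h2 := congrFun h1 k
        simpa [Finset.sum_apply, ha, toE_apply] using h2
      have hlamL : lam ∈ L := by
        rw [hLmem]
        have : A.mulVecLin lam = A.mulVec lam := rfl
        rw [this]
        funext k
        have := hcoord k
        simp only [Matrix.mulVec, dotProduct, Pi.zero_apply]
        rw [← this]
        apply Finset.sum_congr rfl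
        intro i _
        ring
      have hsplit : ∑ i, lam i * b i = lam j * 1 + ∑ i ∈ univ.erase j, lam i * (-σ) := by
        rw [← Finset.add_sum_erase _ (fun i => lam i * b i) (mem_univ j)]
        congr 1
        · rw [hb]; simp
        · apply Finset.sum_congr rfl
          intro i hi
          rw [hb]
          simp [Finset.ne_of_mem_erase hi]
      by_cases hz : ∀ i, lam i = 0
      · have : ∑ i, lam i * b i = 0 :=
          Finset.sum_eq_zero (fun i _ => by rw [hz i]; ring)
        linarith [le_of_eq this]
      push_neg at hz
      obtain ⟨i0, hi0⟩ := hz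
      have hMpos : 0 < linf lam :=
        lt_of_lt_of_le (abs_pos.mpr hi0) (abs_le_linf lam i0)
      obtain ⟨i1, hi1⟩ := exists_eq_ciSup_of_finite (f := fun i => |lam i|)
      have hi1' : lam i1 = linf lam := by
        rw [← abs_of_nonneg (hlam0 i1), hi1]; rfl
      have habs_le : ∀ i, |lam i| ≤ linf lam := fun i => abs_le_linf lam i
      set μ : Fin n → ℝ := (linf lam)⁻¹ • lam with hμ
      have hμL : μ ∈ L := hLsmul _ _ hlamL
      have hμ0 : ∀ k, 0 ≤ μ k := fun k =>
        mul_nonneg (inv_nonneg.mpr (le_of_lt hMpos)) (hlam0 k)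
      have hμ1 : linf μ ≤ 1 := by
        rw [linf]
        apply ciSup_le
        intro k
        have h1 : |μ k| = (linf lam)⁻¹ * |lam k| := by
          rw [hμ]
          simp [abs_mul, abs_of_nonneg (inv_nonneg.mpr (le_of_lt hMpos))]
        rw [h1]
        calc (linf lam)⁻¹ * |lam k| ≤ (linf lam)⁻¹ * linf lam :=
              mul_le_mul_of_nonneg_left (habs_le k) (inv_nonneg.mpr (le_of_lt hMpos))
          _ = 1 := inv_mul_cancel₀ (ne_of_gt hMpos)
      have hμj : μ j ≤ σ := hfeas μ j hμL hμ0 hμ1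
      have hlamj : lam j ≤ σ * linf lam := by
        have h1 : μ j = (linf lam)⁻¹ * lam j := rfl
        rw [h1] at hμj
        have h2 := mul_le_mul_of_nonneg_left hμj (le_of_lt hMpos)
        rw [← mul_assoc, mul_inv_cancel₀ (ne_of_gt hMpos), one_mul] at h2
        linarith [h2]
      rcases eq_or_ne i1 j with rfl | hne
      · exfalso
        rw [hi1'] at hlamj
        nlinarith
      · have hs : linf lam ≤ ∑ i ∈ univ.erase j, lam i := by
          rw [← hi1']
          exact Finset.single_le_sum (fun i _ => hlam0 i)
            (Finset.mem_erase.mpr ⟨hne, mem_univ i1⟩)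
        rw [hsplit]
        have h1 : ∑ i ∈ univ.erase j, lam i * (-σ) = (∑ i ∈ univ.erase j, lam i) * (-σ) :=
          (Finset.sum_mul _ _ _).symm
        rw [h1]
        have h2 : σ * linf lam ≤ σ * ∑ i ∈ univ.erase j, lam i :=
          mul_le_mul_of_nonneg_left hs (le_of_lt hσpos)
        nlinarith
    obtain ⟨y, hy⟩ := key_exists hn a b (rho A) hneg hcoer hfark
    have hyj : 1 ≤ ⟪a j, y⟫ := by
      have := hy j
      rw [hb] at this
      simpa using this
    have hyi : ∀ i, -σ ≤ ⟪a i, y⟫ := by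
      intro i
      rcases eq_or_ne i j with rfl | h
      · linarith
      · have := hy i
        rw [hb] at this
        simpa [h] using this
    have hynorm : 1 ≤ ‖y‖ := by
      have h1 := real_inner_le_norm (a j) y
      rw [hanorm j, one_mul] at h1
      linarith
    have hy0 : y ≠ 0 := by
      intro h
      rw [h, norm_zero] at hynorm
      linarith
    set yf : Fin m → ℝ := fun k => (‖y‖⁻¹ • y) k with hyf
    have hty : toE yf = ‖y‖⁻¹ • y := rfl
    have hynf : eNorm yf = 1 := by rw [eNorm_eq_norm, hty]; exact norm_smul_inv_norm hy0
    have hmem : (⨅ i, ∑ k, A k i * yf k) ∈ S := ⟨yf, hynf, rfl⟩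
    have hinv_pos : 0 < ‖y‖⁻¹ := inv_pos.mpr (by linarith)
    have hinv_le : ‖y‖⁻¹ ≤ 1 := by
      rw [inv_le_one_iff₀]
      right; exact hynorm
    have hlow : -σ ≤ ⨅ i, ∑ k, A k i * yf k := by
      apply le_ciInf
      intro i
      rw [hdot yf i, hty, real_inner_smul_right]
      rcases le_or_gt 0 ⟪a i, y⟫ with h | h
      · have := mul_nonneg (le_of_lt hinv_pos) h
        linarith
      · have h1 : 0 ≤ (1 - ‖y‖⁻¹) * (-⟪a i, y⟫) :=
          mul_nonneg (by linarith) (by linarith)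
        have h2 := hyi i
        nlinarith
    have h3 := le_csSup hSbdd hmem
    linarith
  have habs : |rho A| = -(rho A) := abs_of_neg hneg
  rw [habs, sigmaCond]
  split_ifs with h
  · linarith
  · apply le_csInf
    · exact (Set.nonempty_iff_ne_empty.mpr h).image _
    · rintro bb ⟨j, hj, rfl⟩
      exact hmain j hj

end
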